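/- In the original (top-level reset) semantics of λS, Ω ≃_p Sk.Ω: the diverging term Ω is contextually equivalent to the stuck term Sk.Ω, i.e., for every closing context C, ⟨C[Ω]⟩ evaluates to a value iff ⟨C[Sk.Ω]⟩ does (and in fact neither ever does). -/
import Mathlib


/-- Terms of the calculus λS: variables, abstractions, applications,
    shift (Sk.t) and reset (⟨t⟩). -/
inductive Tm : Type
  | var : ℕ → Tm
  | lam : ℕ → Tm → Tm
  | app : Tm → Tm → Tm
  | shift : ℕ → Tm → Tm
  | reset : Tm → Tm
deriving DecidableEq

namespace Tm

/-- Values are λ-abstractions. -/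
def IsValue : Tm → Prop
  | lam _ _ => True
  | _ => False

/-- Free variables. -/
def fv : Tm → Finset ℕ
  | var x => {x}
  | lam x t => fv t \ {x}
  | app a b => fv a ∪ fv b
  | shift k t => fv t \ {k}
  | reset t => fv t

def Closed (t : Tm) : Prop := fv t = ∅

/-- Substitution t{v/x} (substituted terms are closed values, so no
    capture can occur). -/
def subst : Tm → ℕ → Tm → Tm
  | var y, x, v => if y = x then v else var y
  | lam y t, x, v => if y = x then lam y t else lam y (subst t x v)
  | app a b, x, v => app (subst a x v) (subst b x v)
  | shift k t, x, v => if k = x then shift k t else shift k (subst t x v)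
  | reset t, x, v => reset (subst t x v)

end Tm

/-- (Evaluation) contexts F ::= [] | v F | F t | ⟨F⟩, represented outside-in.
    Pure contexts E are those with no reset constructor. -/
inductive Ctx : Type
  | hole : Ctx
  | appR : Tm → Ctx → Ctx   -- v F
  | appL : Ctx → Tm → Ctx   -- F t
  | reset : Ctx → Ctx       -- ⟨F⟩
deriving DecidableEq

namespace Ctx

def plug : Ctx → Tm → Tm
  | hole, t => t
  | appR v F, t => Tm.app v (F.plug t)
  | appL F u, t => Tm.app (F.plug t) u
  | reset F, t => Tm.reset (F.plug t)

/-- Well-formedness: in `v F` the term v must be a value. -/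
def Wf : Ctx → Prop
  | hole => True
  | appR v F => v.IsValue ∧ F.Wf
  | appL F _ => F.Wf
  | reset F => F.Wf

/-- Pure contexts contain no reset around the hole. -/
def Pure : Ctx → Prop
  | hole => True
  | appR _ F => F.Pure
  | appL F _ => F.Pure
  | reset _ => False

def fv : Ctx → Finset ℕ
  | hole => ∅
  | appR v F => v.fv ∪ F.fv
  | appL F u => F.fv ∪ u.fv
  | reset F => F.fv

/-- Context composition: (F.comp G)[t] = F[G[t]]. -/
def comp : Ctx → Ctx → Ctx
  | hole, G => G
  | appR v F, G => appR v (F.comp G)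
  | appL F u, G => appL (F.comp G) u
  | reset F, G => reset (F.comp G)

end Ctx

/-- A canonical fresh variable not occurring in the finite set s. -/
def fresh (s : Finset ℕ) : ℕ := s.sup id + 1

/-- The reduction relation →v of λS. -/
inductive Red : Tm → Tm → Prop
  | beta (F : Ctx) (x : ℕ) (t v : Tm) :
      F.Wf → v.IsValue →
      Red (F.plug (Tm.app (Tm.lam x t) v)) (F.plug (t.subst x v))
  | shift (F E : Ctx) (k : ℕ) (t : Tm) :
      F.Wf → E.Wf → E.Pure →
      Red (F.plug (Tm.reset (E.plug (Tm.shift k t))))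
          (F.plug (Tm.reset (t.subst k
            (Tm.lam (fresh E.fv) (Tm.reset (E.plug (Tm.var (fresh E.fv))))))))
  | reset (F : Ctx) (v : Tm) :
      F.Wf → v.IsValue →
      Red (F.plug (Tm.reset v)) (F.plug v)

/-- A term is stuck if it is not a value and admits no reduction step. -/
def Stuck (t : Tm) : Prop := ¬ t.IsValue ∧ ∀ t', ¬ Red t t'

/-- A normal form is a value or a stuck term. -/
def NormalForm (t : Tm) : Prop := t.IsValue ∨ Stuck t

/-- Reflexive-transitive closure of reduction. -/
def Steps : Tm → Tm → Prop := Relation.ReflTransGen Red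

/-- Evaluation: t ⇓ t' when t →v* t' and t' is irreducible. -/
def Evals (t t' : Tm) : Prop := Steps t t' ∧ ∀ u, ¬ Red t' u

/-- Redexes: (λx.t) v, ⟨E[Sk.t]⟩ with E pure, and ⟨v⟩. -/
def IsRedex (r : Tm) : Prop :=
  (∃ x t v, Tm.IsValue v ∧ r = Tm.app (Tm.lam x t) v) ∨
  (∃ E : Ctx, ∃ k t, E.Wf ∧ E.Pure ∧ r = Tm.reset (E.plug (Tm.shift k t))) ∨
  (∃ v, Tm.IsValue v ∧ r = Tm.reset v)

/-- Divergence: an infinite reduction sequence. -/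
def Diverges (t : Tm) : Prop := ∃ f : ℕ → Tm, f 0 = t ∧ ∀ n, Red (f n) (f (n + 1))

/-- Ω = (λx.x x)(λx.x x). -/
def Omega : Tm :=
  Tm.app (Tm.lam 0 (Tm.app (Tm.var 0) (Tm.var 0)))
         (Tm.lam 0 (Tm.app (Tm.var 0) (Tm.var 0)))

/-- Arbitrary one-hole contexts C. -/
inductive GCtx : Type
  | hole : GCtx
  | lam : ℕ → GCtx → GCtx
  | appL : GCtx → Tm → GCtx
  | appR : Tm → GCtx → GCtx
  | shift : ℕ → GCtx → GCtx
  | reset : GCtx → GCtx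

def GCtx.plug : GCtx → Tm → Tm
  | hole, t => t
  | lam x C, t => Tm.lam x (C.plug t)
  | appL C u, t => Tm.app (C.plug t) u
  | appR u C, t => Tm.app u (C.plug t)
  | shift k C, t => Tm.shift k (C.plug t)
  | reset C, t => Tm.reset (C.plug t)

/-- Contextual equivalence for the relaxed semantics. -/
def CtxEquiv (t0 t1 : Tm) : Prop :=
  ∀ C : GCtx, (C.plug t0).Closed → (C.plug t1).Closed →
    ((∃ v, v.IsValue ∧ Evals (C.plug t0) v) ↔ (∃ v, v.IsValue ∧ Evals (C.plug t1) v)) ∧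
    ((∃ s, Stuck s ∧ Evals (C.plug t0) s) ↔ (∃ s, Stuck s ∧ Evals (C.plug t1) s))

/-- Contextual equivalence for the original (top-level reset) semantics. -/
def CtxEquivP (t0 t1 : Tm) : Prop :=
  ∀ C : GCtx, (Tm.reset (C.plug t0)).Closed → (Tm.reset (C.plug t1)).Closed →
    ((∃ v, v.IsValue ∧ Evals (Tm.reset (C.plug t0)) v) ↔
     (∃ v, v.IsValue ∧ Evals (Tm.reset (C.plug t1)) v))

/-- The term-generating closure of a relation R on closed terms. -/
inductive TmClo (R : Tm → Tm → Prop) : Tm → Tm → Prop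
  | base {t t'} : R t t' → TmClo R t t'
  | var (x : ℕ) : TmClo R (Tm.var x) (Tm.var x)
  | lam {t t'} (x : ℕ) : TmClo R t t' → TmClo R (Tm.lam x t) (Tm.lam x t')
  | app {a a' b b'} : TmClo R a a' → TmClo R b b' →
      TmClo R (Tm.app a b) (Tm.app a' b')
  | shift {t t'} (k : ℕ) : TmClo R t t' → TmClo R (Tm.shift k t) (Tm.shift k t')
  | reset {t t'} : TmClo R t t' → TmClo R (Tm.reset t) (Tm.reset t')
section Aux

open Tm Ctx

/-- δ = x x body of Omega's lambda -/
def Dlt : Tm := Tm.app (Tm.var 0) (Tm.var 0)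

lemma omega_def : Omega = Tm.app (Tm.lam 0 Dlt) (Tm.lam 0 Dlt) := rfl

lemma isValue_exists {t : Tm} (h : t.IsValue) : ∃ x b, t = Tm.lam x b := by
  cases t <;> simp [Tm.IsValue] at h ⊢

lemma plug_eq_lam {G : Ctx} {r : Tm} {x : ℕ} {b : Tm}
    (h : G.plug r = Tm.lam x b) : G = Ctx.hole ∧ r = Tm.lam x b := by
  cases G <;> simp [Ctx.plug] at h ⊢ <;> exact h

lemma plug_omega_ne_lam (F : Ctx) (x : ℕ) (b : Tm) : F.plug Omega ≠ Tm.lam x b := by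
  intro h
  rcases plug_eq_lam h with ⟨rfl, h2⟩
  simp [Omega] at h2

lemma plug_omega_not_value (F : Ctx) : ¬ (F.plug Omega).IsValue := by
  intro h
  rcases isValue_exists h with ⟨x, b, hb⟩
  exact plug_omega_ne_lam F x b hb

lemma plug_shift_ne_lam (F : Ctx) (k0 : ℕ) (t : Tm) (x : ℕ) (b : Tm) :
    F.plug (Tm.shift k0 t) ≠ Tm.lam x b := by
  intro h
  rcases plug_eq_lam h with ⟨rfl, h2⟩
  simp [Ctx.plug] at h2

lemma plug_shift_not_value (F : Ctx) (k0 : ℕ) (t : Tm) :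
    ¬ (F.plug (Tm.shift k0 t)).IsValue := by
  intro h
  rcases isValue_exists h with ⟨x, b, hb⟩
  exact plug_shift_ne_lam F k0 t x b hb

lemma subst_omega (x : ℕ) (v : Tm) : Omega.subst x v = Omega := by
  rcases eq_or_ne x 0 with rfl | hx
  · simp [Omega, Dlt, Tm.subst]
  · simp [Omega, Dlt, Tm.subst, hx, Ne.symm hx]

lemma subst_dlt : Dlt.subst 0 (Tm.lam 0 Dlt) = Omega := by
  simp [Omega, Dlt, Tm.subst]

lemma omega_fv : Omega.fv = ∅ := by
  simp [Omega, Dlt, Tm.fv]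

/-- Head steps (redex/contractum pairs). -/
inductive HS : Tm → Tm → Prop
  | beta (x : ℕ) (t v : Tm) : v.IsValue → HS (Tm.app (Tm.lam x t) v) (t.subst x v)
  | sft (E : Ctx) (k0 : ℕ) (t : Tm) : E.Wf → E.Pure →
      HS (Tm.reset (E.plug (Tm.shift k0 t)))
         (Tm.reset (t.subst k0
            (Tm.lam (fresh E.fv) (Tm.reset (E.plug (Tm.var (fresh E.fv)))))))
  | rst (v : Tm) : v.IsValue → HS (Tm.reset v) v

lemma red_iff {p q : Tm} :
    Red p q ↔ ∃ (G : Ctx) (r r' : Tm), G.Wf ∧ HS r r' ∧ p = G.plug r ∧ q = G.plug r' := by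
  constructor
  · intro h
    cases h with
    | beta F x t v hF hv => exact ⟨F, _, _, hF, HS.beta x t v hv, rfl, rfl⟩
    | shift F E k0 t hF hE hP => exact ⟨F, _, _, hF, HS.sft E k0 t hE hP, rfl, rfl⟩
    | reset F v hF hv => exact ⟨F, _, _, hF, HS.rst v hv, rfl, rfl⟩
  · rintro ⟨G, r, r', hG, hHS, rfl, rfl⟩
    cases hHS with
    | beta x t v hv => exact Red.beta G x t v hG hv
    | sft E k0 t hE hP => exact Red.shift G E k0 t hG hE hP
    | rst w hw => exact Red.reset G _ hG hw

end Aux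

@[simp] lemma wf_hole : Ctx.hole.Wf := trivial
@[simp] lemma wf_appR {v : Tm} {F : Ctx} : (Ctx.appR v F).Wf ↔ v.IsValue ∧ F.Wf := Iff.rfl
@[simp] lemma wf_appL {F : Ctx} {u : Tm} : (Ctx.appL F u).Wf ↔ F.Wf := Iff.rfl
@[simp] lemma wf_reset {F : Ctx} : (Ctx.reset F).Wf ↔ F.Wf := Iff.rfl

lemma noShiftInOmega : ∀ (F : Ctx), F.Wf → ∀ (E : Ctx) (k0 : ℕ) (t : Tm), E.Wf → E.Pure →
    F.plug Omega ≠ E.plug (Tm.shift k0 t) := by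
  intro F
  induction F with
  | hole =>
    intro _ E k0 t hEw hEp h
    cases E with
    | hole => rw [omega_def] at h; exact Tm.noConfusion h
    | appL E0 u =>
      simp only [Ctx.plug] at h; rw [omega_def] at h
      injection h with h1 h2
      exact plug_shift_ne_lam E0 k0 t 0 Dlt h1.symm
    | appR v E0 =>
      simp only [Ctx.plug] at h; rw [omega_def] at h
      injection h with h1 h2
      exact plug_shift_ne_lam E0 k0 t 0 Dlt h2.symm
    | reset E0 => exact absurd hEp (by simp [Ctx.Pure])
  | appL F0 u ih =>
    intro hFw E k0 t hEw hEp h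
    cases E with
    | hole => simp only [Ctx.plug] at h; exact Tm.noConfusion h
    | appL E0 u' =>
      simp only [Ctx.plug] at h
      injection h with h1 h2
      exact ih (wf_appL.mp hFw) E0 k0 t (wf_appL.mp hEw) hEp h1
    | appR v E0 =>
      simp only [Ctx.plug] at h
      injection h with h1 h2
      exact absurd ((wf_appR.mp hEw).1) (h1 ▸ plug_omega_not_value F0)
    | reset E0 => exact absurd hEp (by simp [Ctx.Pure])
  | appR v F0 ih =>
    intro hFw E k0 t hEw hEp h
    obtain ⟨hv, hF0⟩ := wf_appR.mp hFw
    cases E with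
    | hole => simp only [Ctx.plug] at h; exact Tm.noConfusion h
    | appL E0 u' =>
      simp only [Ctx.plug] at h
      injection h with h1 h2
      rcases isValue_exists hv with ⟨x, b, rfl⟩
      exact plug_shift_ne_lam E0 k0 t x b h1.symm
    | appR v' E0 =>
      simp only [Ctx.plug] at h
      injection h with h1 h2
      exact ih hF0 E0 k0 t (wf_appR.mp hEw).2 hEp h2
    | reset E0 => exact absurd hEp (by simp [Ctx.Pure])
  | reset F0 ih =>
    intro hFw E k0 t hEw hEp h
    cases E with
    | hole => simp only [Ctx.plug] at h; exact Tm.noConfusion h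
    | appL E0 u' => simp only [Ctx.plug] at h; exact Tm.noConfusion h
    | appR v' E0 => simp only [Ctx.plug] at h; exact Tm.noConfusion h
    | reset E0 => exact absurd hEp (by simp [Ctx.Pure])

lemma omega_unify : ∀ (F : Ctx), F.Wf → ∀ (G : Ctx) (r r' : Tm), G.Wf → HS r r' →
    F.plug Omega = G.plug r → G.plug r' = F.plug Omega := by
  intro F
  induction F with
  | hole =>
    intro _ G r r' hGw hHS h
    cases G with
    | hole =>
      simp only [Ctx.plug] at h ⊢
      cases hHS with
      | beta x t v hv =>
        rw [omega_def] at h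
        injection h with h1 h2
        injection h1 with hx ht
        subst hx; subst ht; subst h2
        exact subst_dlt
      | sft E k0 t hE hP => rw [omega_def] at h; exact Tm.noConfusion h
      | rst w hw => rw [omega_def] at h; exact Tm.noConfusion h
    | appL G0 u =>
      simp only [Ctx.plug] at h
      rw [omega_def] at h
      injection h with h1 h2
      rcases plug_eq_lam h1.symm with ⟨rfl, rfl⟩
      cases hHS
    | appR v G0 =>
      simp only [Ctx.plug] at h
      rw [omega_def] at h
      injection h with h1 h2
      rcases plug_eq_lam h2.symm with ⟨rfl, rfl⟩
      cases hHS
    | reset G0 =>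
      simp only [Ctx.plug] at h
      rw [omega_def] at h
      exact Tm.noConfusion h
  | appL F0 u ih =>
    intro hFw G r r' hGw hHS h
    cases G with
    | hole =>
      simp only [Ctx.plug] at h ⊢
      cases hHS with
      | beta x t v hv =>
        injection h with h1 h2
        exact absurd h1 (plug_omega_ne_lam F0 x t)
      | sft E k0 t hE hP => exact Tm.noConfusion h
      | rst w hw => exact Tm.noConfusion h
    | appL G0 u' =>
      simp only [Ctx.plug] at h ⊢
      injection h with h1 h2
      rw [ih (wf_appL.mp hFw) G0 r r' (wf_appL.mp hGw) hHS h1, h2]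
    | appR v G0 =>
      simp only [Ctx.plug] at h
      injection h with h1 h2
      exact absurd ((wf_appR.mp hGw).1) (h1 ▸ plug_omega_not_value F0)
    | reset G0 => simp only [Ctx.plug] at h; exact Tm.noConfusion h
  | appR v F0 ih =>
    intro hFw G r r' hGw hHS h
    obtain ⟨hv, hF0⟩ := wf_appR.mp hFw
    cases G with
    | hole =>
      simp only [Ctx.plug] at h ⊢
      cases hHS with
      | beta x t w hw =>
        injection h with h1 h2
        exact absurd hw (h2 ▸ plug_omega_not_value F0)
      | sft E k0 t hE hP => exact Tm.noConfusion h
      | rst w hw => exact Tm.noConfusion h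
    | appL G0 u' =>
      simp only [Ctx.plug] at h
      injection h with h1 h2
      rcases isValue_exists hv with ⟨x, b, rfl⟩
      rcases plug_eq_lam h1.symm with ⟨rfl, rfl⟩
      cases hHS
    | appR v' G0 =>
      simp only [Ctx.plug] at h ⊢
      injection h with h1 h2
      rw [ih hF0 G0 r r' (wf_appR.mp hGw).2 hHS h2, h1]
    | reset G0 => simp only [Ctx.plug] at h; exact Tm.noConfusion h
  | reset F0 ih =>
    intro hFw G r r' hGw hHS h
    cases G with
    | hole =>
      simp only [Ctx.plug] at h ⊢
      cases hHS with
      | beta x t w hw => exact Tm.noConfusion h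
      | sft E k0 t hE hP =>
        injection h with h1
        exact absurd h1 (noShiftInOmega F0 (wf_reset.mp hFw) E k0 t hE hP)
      | rst w hw =>
        injection h with h1
        exact absurd hw (h1 ▸ plug_omega_not_value F0)
    | appL G0 u' => simp only [Ctx.plug] at h; exact Tm.noConfusion h
    | appR v' G0 => simp only [Ctx.plug] at h; exact Tm.noConfusion h
    | reset G0 =>
      simp only [Ctx.plug] at h ⊢
      injection h with h1
      rw [ih (wf_reset.mp hFw) G0 r r' (wf_reset.mp hGw) hHS h1]

lemma omega_step {F : Ctx} (hF : F.Wf) {q : Tm} (h : Red (F.plug Omega) q) :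
    q = F.plug Omega := by
  rcases red_iff.mp h with ⟨G, r, r', hG, hHS, heq, rfl⟩
  exact omega_unify F hF G r r' hG hHS heq

lemma omega_no_val {F : Ctx} (hF : F.Wf) {v : Tm} (h : Steps (F.plug Omega) v) :
    ¬ v.IsValue := by
  have key : ∀ p, Steps p v → p = F.plug Omega → ¬ v.IsValue := by
    intro p hs
    induction hs using Relation.ReflTransGen.head_induction_on with
    | refl => rintro rfl; exact plug_omega_not_value F
    | head hstep htail ih => rintro rfl; exact ih (omega_step hF hstep)
  exact key _ h rfl

@[simp] lemma pure_hole : Ctx.hole.Pure := trivial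
@[simp] lemma pure_appR {v : Tm} {F : Ctx} : (Ctx.appR v F).Pure ↔ F.Pure := Iff.rfl
@[simp] lemma pure_appL {F : Ctx} {u : Tm} : (Ctx.appL F u).Pure ↔ F.Pure := Iff.rfl
@[simp] lemma pure_reset {F : Ctx} : (Ctx.reset F).Pure ↔ False := Iff.rfl

/-- The simulation relation between Ω-programs and (Sk.Ω)-programs. -/
def Rl (k : ℕ) : Tm → Tm → Prop :=
  TmClo (fun a b => a = Omega ∧ b = Tm.shift k Omega)

lemma rl_base (k : ℕ) : Rl k Omega (Tm.shift k Omega) := TmClo.base ⟨rfl, rfl⟩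

lemma rel_refl {k : ℕ} : ∀ t : Tm, Rl k t t := by
  intro t
  induction t with
  | var x => exact TmClo.var x
  | lam x t ih => exact TmClo.lam x ih
  | app a b iha ihb => exact TmClo.app iha ihb
  | shift x t ih => exact TmClo.shift x ih
  | reset t ih => exact TmClo.reset ih

lemma rel_fv {k : ℕ} {t t' : Tm} (h : Rl k t t') : t.fv = t'.fv := by
  induction h with
  | base hb => rcases hb with ⟨rfl, rfl⟩; simp [Tm.fv, omega_fv]
  | var x => rfl
  | lam x h ih => simp [Tm.fv, ih]
  | app h1 h2 ih1 ih2 => simp [Tm.fv, ih1, ih2]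
  | shift x h ih => simp [Tm.fv, ih]
  | reset h ih => simp [Tm.fv, ih]

lemma rel_val_right {k : ℕ} {v v' : Tm} (h : Rl k v v') (hv : v.IsValue) : v'.IsValue := by
  cases h with
  | base hb => rcases hb with ⟨rfl, rfl⟩; simp [Omega, Tm.IsValue] at hv
  | lam x h => trivial
  | var x => simp [Tm.IsValue] at hv
  | app h1 h2 => simp [Tm.IsValue] at hv
  | shift x h => simp [Tm.IsValue] at hv
  | reset h => simp [Tm.IsValue] at hv

lemma rel_val_left {k : ℕ} {v v' : Tm} (h : Rl k v v') (hv : v'.IsValue) : v.IsValue := by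
  cases h with
  | base hb => rcases hb with ⟨rfl, rfl⟩; simp [Tm.IsValue] at hv
  | lam x h => trivial
  | var x => simp [Tm.IsValue] at hv
  | app h1 h2 => simp [Tm.IsValue] at hv
  | shift x h => simp [Tm.IsValue] at hv
  | reset h => simp [Tm.IsValue] at hv


lemma subst_shift_omega {k x : ℕ} {v : Tm} :
    (Tm.shift k Omega).subst x v = Tm.shift k Omega := by
  have h0 : (Tm.shift k Omega).subst x v
      = if k = x then Tm.shift k Omega else Tm.shift k (Omega.subst x v) := rfl
  rcases eq_or_ne k x with h | h
  · rw [h0, if_pos h]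
  · rw [h0, if_neg h, subst_omega]

lemma rel_subst {k : ℕ} {t t' b b' : Tm} {x : ℕ} (h : Rl k t t') (hb : Rl k b b') :
    Rl k (t.subst x b) (t'.subst x b') := by
  induction h with
  | base hbase =>
    rcases hbase with ⟨rfl, rfl⟩
    rw [subst_omega, subst_shift_omega]
    exact rl_base k
  | var y =>
    simp only [Tm.subst]
    split
    · exact hb
    · exact TmClo.var y
  | lam y h ih =>
    simp only [Tm.subst]
    split
    · exact TmClo.lam y h
    · exact TmClo.lam y ih
  | app h1 h2 ih1 ih2 => exact TmClo.app ih1 ih2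
  | shift y h ih =>
    simp only [Tm.subst]
    split
    · exact TmClo.shift y h
    · exact TmClo.shift y ih
  | reset h ih => exact TmClo.reset ih

/-- Context-level simulation relation. -/
inductive RelC (k : ℕ) : Ctx → Ctx → Prop
  | hole : RelC k Ctx.hole Ctx.hole
  | appR {v v' : Tm} {F F' : Ctx} : Rl k v v' → RelC k F F' →
      RelC k (Ctx.appR v F) (Ctx.appR v' F')
  | appL {F F' : Ctx} {u u' : Tm} : RelC k F F' → Rl k u u' →
      RelC k (Ctx.appL F u) (Ctx.appL F' u')
  | reset {F F' : Ctx} : RelC k F F' → RelC k (Ctx.reset F) (Ctx.reset F')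

lemma relc_refl {k : ℕ} : ∀ F : Ctx, RelC k F F := by
  intro F
  induction F with
  | hole => exact RelC.hole
  | appR v F ih => exact RelC.appR (rel_refl v) ih
  | appL F u ih => exact RelC.appL ih (rel_refl u)
  | reset F ih => exact RelC.reset ih

lemma relc_plug {k : ℕ} {F F' : Ctx} (hc : RelC k F F') {t t' : Tm} (ht : Rl k t t') :
    Rl k (F.plug t) (F'.plug t') := by
  induction hc with
  | hole => exact ht
  | appR h1 h2 ih => exact TmClo.app h1 ih
  | appL h1 h2 ih => exact TmClo.app ih h2
  | reset h ih => exact TmClo.reset ih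

lemma relc_wf_right {k : ℕ} {F F' : Ctx} (hc : RelC k F F') (hw : F.Wf) : F'.Wf := by
  induction hc with
  | hole => trivial
  | appR h1 h2 ih =>
    obtain ⟨ha, hb⟩ := wf_appR.mp hw
    exact wf_appR.mpr ⟨rel_val_right h1 ha, ih hb⟩
  | appL h1 h2 ih => exact wf_appL.mpr (ih (wf_appL.mp hw))
  | reset h ih => exact wf_reset.mpr (ih (wf_reset.mp hw))

lemma relc_wf_left {k : ℕ} {F F' : Ctx} (hc : RelC k F F') (hw : F'.Wf) : F.Wf := by
  induction hc with
  | hole => trivial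
  | appR h1 h2 ih =>
    obtain ⟨ha, hb⟩ := wf_appR.mp hw
    exact wf_appR.mpr ⟨rel_val_left h1 ha, ih hb⟩
  | appL h1 h2 ih => exact wf_appL.mpr (ih (wf_appL.mp hw))
  | reset h ih => exact wf_reset.mpr (ih (wf_reset.mp hw))

lemma relc_pure_right {k : ℕ} {F F' : Ctx} (hc : RelC k F F') (hp : F.Pure) : F'.Pure := by
  induction hc with
  | hole => trivial
  | appR h1 h2 ih => exact pure_appR.mpr (ih (pure_appR.mp hp))
  | appL h1 h2 ih => exact pure_appL.mpr (ih (pure_appL.mp hp))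
  | reset h ih => exact absurd hp (by simp)

lemma relc_pure_left {k : ℕ} {F F' : Ctx} (hc : RelC k F F') (hp : F'.Pure) : F.Pure := by
  induction hc with
  | hole => trivial
  | appR h1 h2 ih => exact pure_appR.mpr (ih (pure_appR.mp hp))
  | appL h1 h2 ih => exact pure_appL.mpr (ih (pure_appL.mp hp))
  | reset h ih => exact absurd hp (by simp)

lemma relc_fv {k : ℕ} {F F' : Ctx} (hc : RelC k F F') : F.fv = F'.fv := by
  induction hc with
  | hole => rfl
  | appR h1 h2 ih => simp [Ctx.fv, rel_fv h1, ih]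
  | appL h1 h2 ih => simp [Ctx.fv, rel_fv h2, ih]
  | reset h ih => simp [Ctx.fv, ih]

lemma decompL {k : ℕ} : ∀ (G : Ctx) (s p' : Tm), (∀ x b, s ≠ Tm.lam x b) →
    Rl k (G.plug s) p' →
    ∃ (G' : Ctx) (s' : Tm), RelC k G G' ∧ p' = G'.plug s' ∧ Rl k s s' := by
  intro G
  induction G with
  | hole => intro s p' _ h; exact ⟨Ctx.hole, p', RelC.hole, rfl, h⟩
  | appL G0 u ih =>
    intro s p' hs h
    simp only [Ctx.plug] at h
    cases h with
    | base hb =>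
      rcases hb with ⟨hb1, rfl⟩
      rw [omega_def] at hb1
      injection hb1 with h1 h2
      rcases plug_eq_lam h1 with ⟨rfl, rfl⟩
      exact absurd rfl (hs 0 Dlt)
    | app h1 h2 =>
      rcases ih s _ hs h1 with ⟨G0', s', hc, rfl, hss⟩
      exact ⟨Ctx.appL G0' _, s', RelC.appL hc h2, rfl, hss⟩
  | appR v G0 ih =>
    intro s p' hs h
    simp only [Ctx.plug] at h
    cases h with
    | base hb =>
      rcases hb with ⟨hb1, rfl⟩
      rw [omega_def] at hb1
      injection hb1 with h1 h2
      rcases plug_eq_lam h2 with ⟨rfl, rfl⟩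
      exact absurd rfl (hs 0 Dlt)
    | app h1 h2 =>
      rcases ih s _ hs h2 with ⟨G0', s', hc, rfl, hss⟩
      exact ⟨Ctx.appR _ G0', s', RelC.appR h1 hc, rfl, hss⟩
  | reset G0 ih =>
    intro s p' hs h
    simp only [Ctx.plug] at h
    cases h with
    | base hb =>
      rcases hb with ⟨hb1, rfl⟩
      rw [omega_def] at hb1
      exact Tm.noConfusion hb1
    | reset h1 =>
      rcases ih s _ hs h1 with ⟨G0', s', hc, rfl, hss⟩
      exact ⟨Ctx.reset G0', s', RelC.reset hc, rfl, hss⟩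

lemma decompR {k : ℕ} : ∀ (G' : Ctx) (s' p : Tm), Rl k p (G'.plug s') →
    ∃ (G : Ctx) (s : Tm), RelC k G G' ∧ p = G.plug s ∧ Rl k s s' := by
  intro G'
  induction G' with
  | hole => intro s' p h; exact ⟨Ctx.hole, p, RelC.hole, rfl, h⟩
  | appL G0' u' ih =>
    intro s' p h
    simp only [Ctx.plug] at h
    cases h with
    | base hb => rcases hb with ⟨rfl, hb2⟩; exact Tm.noConfusion hb2
    | app h1 h2 =>
      rcases ih s' _ h1 with ⟨G0, s, hc, rfl, hss⟩
      exact ⟨Ctx.appL G0 _, s, RelC.appL hc h2, rfl, hss⟩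
  | appR v' G0' ih =>
    intro s' p h
    simp only [Ctx.plug] at h
    cases h with
    | base hb => rcases hb with ⟨rfl, hb2⟩; exact Tm.noConfusion hb2
    | app h1 h2 =>
      rcases ih s' _ h2 with ⟨G0, s, hc, rfl, hss⟩
      exact ⟨Ctx.appR _ G0, s, RelC.appR h1 hc, rfl, hss⟩
  | reset G0' ih =>
    intro s' p h
    simp only [Ctx.plug] at h
    cases h with
    | base hb => rcases hb with ⟨rfl, hb2⟩; exact Tm.noConfusion hb2
    | reset h1 =>
      rcases ih s' _ h1 with ⟨G0, s, hc, rfl, hss⟩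
      exact ⟨Ctx.reset G0, s, RelC.reset hc, rfl, hss⟩

lemma comp_plug : ∀ (F G : Ctx) (t : Tm), (F.comp G).plug t = F.plug (G.plug t) := by
  intro F G t
  induction F with
  | hole => rfl
  | appR v F ih => simp [Ctx.comp, Ctx.plug, ih]
  | appL F u ih => simp [Ctx.comp, Ctx.plug, ih]
  | reset F ih => simp [Ctx.comp, Ctx.plug, ih]

lemma comp_wf : ∀ (F G : Ctx), F.Wf → G.Wf → (F.comp G).Wf := by
  intro F G hF hG
  induction F with
  | hole => exact hG
  | appR v F ih =>
    obtain ⟨h1, h2⟩ := wf_appR.mp hF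
    exact wf_appR.mpr ⟨h1, ih h2⟩
  | appL F u ih => exact wf_appL.mpr (ih (wf_appL.mp hF))
  | reset F ih => exact wf_reset.mpr (ih (wf_reset.mp hF))

lemma simL {k : ℕ} {p p' q : Tm} (h : Rl k p p') (hr : Red p q) :
    ∃ q', Steps p' q' ∧ Rl k q q' := by
  rcases red_iff.mp hr with ⟨G, r, r', hG, hHS, rfl, rfl⟩
  cases hHS with
  | beta x t v hv =>
    rcases decompL G _ p' (fun a b hab => Tm.noConfusion hab) h with ⟨G', s', hc, rfl, hss⟩
    cases hss with
    | base hb =>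
      rcases hb with ⟨hb1, rfl⟩
      rw [omega_def] at hb1
      injection hb1 with h1 h2
      injection h1 with hx ht
      subst hx; subst ht; subst h2
      refine ⟨G'.plug (Tm.shift k Omega), Relation.ReflTransGen.refl, ?_⟩
      rw [subst_dlt]
      exact relc_plug hc (rl_base k)
    | app h1 h2 =>
      cases h1 with
      | base hb =>
        rcases hb with ⟨hb1, _⟩
        rw [omega_def] at hb1
        exact Tm.noConfusion hb1
      | lam _ h1' =>
        refine ⟨_, Relation.ReflTransGen.single (red_iff.mpr
          ⟨G', _, _, relc_wf_right hc hG, HS.beta x _ _ (rel_val_right h2 hv), rfl, rfl⟩),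
          relc_plug hc (rel_subst h1' h2)⟩
  | sft E k0 t hE hP =>
    rcases decompL G _ p' (fun a b hab => Tm.noConfusion hab) h with ⟨G', s', hc, rfl, hss⟩
    cases hss with
    | base hb =>
      rcases hb with ⟨hb1, _⟩
      rw [omega_def] at hb1
      exact Tm.noConfusion hb1
    | reset hm =>
      rcases decompL E _ _ (fun a b hab => Tm.noConfusion hab) hm with ⟨E', s'', hcE, rfl, hss2⟩
      cases hss2 with
      | base hb =>
        rcases hb with ⟨hb1, _⟩
        rw [omega_def] at hb1
        exact Tm.noConfusion hb1
      | shift _ ht' =>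
        have hfv : E.fv = E'.fv := relc_fv hcE
        refine ⟨_, Relation.ReflTransGen.single (red_iff.mpr
          ⟨G', _, _, relc_wf_right hc hG,
            HS.sft E' k0 _ (relc_wf_right hcE hE) (relc_pure_right hcE hP), rfl, rfl⟩), ?_⟩
        refine relc_plug hc (TmClo.reset (rel_subst ht' ?_))
        rw [← hfv]
        exact TmClo.lam _ (TmClo.reset (relc_plug hcE (TmClo.var _)))
  | rst w hw =>
    rcases decompL G _ p' (fun a b hab => Tm.noConfusion hab) h with ⟨G', s', hc, rfl, hss⟩
    cases hss with
    | base hb =>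
      rcases hb with ⟨hb1, _⟩
      rw [omega_def] at hb1
      exact Tm.noConfusion hb1
    | reset hm =>
      exact ⟨_, Relation.ReflTransGen.single (red_iff.mpr
        ⟨G', _, _, relc_wf_right hc hG, HS.rst _ (rel_val_right hm hw), rfl, rfl⟩),
        relc_plug hc hm⟩

lemma simR {k : ℕ} {p p' q' : Tm} (h : Rl k p p') (hr : Red p' q') :
    (∃ q, Red p q ∧ Rl k q q') ∨ (∃ F' : Ctx, F'.Wf ∧ q' = F'.plug Omega) := by
  rcases red_iff.mp hr with ⟨G', r, r', hG', hHS, rfl, rfl⟩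
  cases hHS with
  | beta x t' v' hv' =>
    rcases decompR G' _ p h with ⟨G, s, hc, rfl, hss⟩
    cases hss with
    | base hb => rcases hb with ⟨rfl, hb2⟩; exact Tm.noConfusion hb2
    | app h1 h2 =>
      cases h1 with
      | base hb => rcases hb with ⟨rfl, hb2⟩; exact Tm.noConfusion hb2
      | lam _ h1' =>
        left
        exact ⟨_, red_iff.mpr ⟨G, _, _, relc_wf_left hc hG',
          HS.beta x _ _ (rel_val_left h2 hv'), rfl, rfl⟩,
          relc_plug hc (rel_subst h1' h2)⟩
  | sft E' k0 t0 hE' hP' =>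
    rcases decompR G' _ p h with ⟨G, s, hc, rfl, hss⟩
    cases hss with
    | base hb => rcases hb with ⟨rfl, hb2⟩; exact Tm.noConfusion hb2
    | reset hm =>
      rcases decompR E' _ _ hm with ⟨E, s0, hcE, rfl, hss2⟩
      cases hss2 with
      | base hb =>
        rcases hb with ⟨rfl, hb2⟩
        injection hb2 with hk htt
        subst hk; subst htt
        right
        refine ⟨G'.comp (Ctx.reset Ctx.hole), comp_wf G' _ hG' trivial, ?_⟩
        rw [comp_plug]
        simp only [Ctx.plug]
        rw [subst_omega]
      | shift _ ht =>
        left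
        have hfv : E.fv = E'.fv := relc_fv hcE
        refine ⟨_, red_iff.mpr ⟨G, _, _, relc_wf_left hc hG',
          HS.sft E k0 _ (relc_wf_left hcE hE') (relc_pure_left hcE hP'), rfl, rfl⟩, ?_⟩
        refine relc_plug hc (TmClo.reset (rel_subst ht ?_))
        rw [hfv]
        exact TmClo.lam _ (TmClo.reset (relc_plug hcE (TmClo.var _)))
  | rst w' hw' =>
    rcases decompR G' _ p h with ⟨G, s, hc, rfl, hss⟩
    cases hss with
    | base hb => rcases hb with ⟨rfl, hb2⟩; exact Tm.noConfusion hb2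
    | reset hm =>
      left
      exact ⟨_, red_iff.mpr ⟨G, _, _, relc_wf_left hc hG',
        HS.rst _ (rel_val_left hm hw'), rfl, rfl⟩, relc_plug hc hm⟩

lemma val_irred {w : Tm} (hw : w.IsValue) : ∀ u, ¬ Red w u := by
  intro u hr
  rcases red_iff.mp hr with ⟨G, r, r', hG, hHS, heq, _⟩
  rcases isValue_exists hw with ⟨x, b, rfl⟩
  rcases plug_eq_lam heq.symm with ⟨rfl, rfl⟩
  cases hHS

lemma evalsL {k : ℕ} {p w : Tm} (hs : Steps p w) (hw : w.IsValue)
    (p' : Tm) (h : Rl k p p') : ∃ w', w'.IsValue ∧ Evals p' w' := by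
  induction hs using Relation.ReflTransGen.head_induction_on generalizing p' with
  | refl =>
    have hw' := rel_val_right h hw
    exact ⟨p', hw', Relation.ReflTransGen.refl, val_irred hw'⟩
  | head hstep htail ih =>
    rcases simL h hstep with ⟨q', hsq, hrel⟩
    rcases ih q' hrel with ⟨w', hw', hsw, hirr⟩
    exact ⟨w', hw', hsq.trans hsw, hirr⟩

lemma evalsR {k : ℕ} {p' w' : Tm} (hs : Steps p' w') (hw : w'.IsValue)
    (p : Tm) (h : Rl k p p') : ∃ w, w.IsValue ∧ Evals p w := by
  induction hs using Relation.ReflTransGen.head_induction_on generalizing p with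
  | refl =>
    have hwp := rel_val_left h hw
    exact ⟨p, hwp, Relation.ReflTransGen.refl, val_irred hwp⟩
  | head hstep htail ih =>
    rcases simR h hstep with ⟨q, hq, hrel⟩ | ⟨F', hF', rfl⟩
    · rcases ih q hrel with ⟨w, hwv, hsw, hirr⟩
      exact ⟨w, hwv, (Relation.ReflTransGen.single hq).trans hsw, hirr⟩
    · exact absurd hw (omega_no_val hF' htail)

lemma gctx_rel (k : ℕ) : ∀ C : GCtx, Rl k (C.plug Omega) (C.plug (Tm.shift k Omega)) := by
  intro C
  induction C with
  | hole => exact rl_base k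
  | lam x C ih => exact TmClo.lam x ih
  | appL C u ih => exact TmClo.app ih (rel_refl u)
  | appR u C ih => exact TmClo.app (rel_refl u) ih
  | shift x C ih => exact TmClo.shift x ih
  | reset C ih => exact TmClo.reset ih

/-- under the top-level-reset semantics, Ω ≃_p Sk.Ω; moreover
    for any evaluation context F, neither ⟨F[Ω]⟩ nor ⟨F[Sk.Ω]⟩ evaluates to
    a value. -/

theorem omega_equivP_shift_omega (k : ℕ) :
    CtxEquivP Omega (Tm.shift k Omega) ∧
    (∀ F : Ctx, F.Wf →
      (¬ ∃ v, v.IsValue ∧ Evals (Tm.reset (F.plug Omega)) v) ∧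
      (¬ ∃ v, v.IsValue ∧ Evals (Tm.reset (F.plug (Tm.shift k Omega))) v)) := by
  have part2a : ∀ F : Ctx, F.Wf → ¬ ∃ v, v.IsValue ∧ Evals (Tm.reset (F.plug Omega)) v := by
    rintro F hF ⟨v, hv, hs, _⟩
    exact omega_no_val (F := Ctx.reset F) hF hs hv
  have relCF : ∀ F : Ctx, Rl k (Tm.reset (F.plug Omega)) (Tm.reset (F.plug (Tm.shift k Omega))) :=
    fun F => TmClo.reset (relc_plug (relc_refl F) (rl_base k))
  have part2b : ∀ F : Ctx, F.Wf →
      ¬ ∃ v, v.IsValue ∧ Evals (Tm.reset (F.plug (Tm.shift k Omega))) v := by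
    rintro F hF ⟨v, hv, hs, hirr⟩
    rcases evalsR hs hv _ (relCF F) with ⟨w, hw, hev⟩
    exact part2a F hF ⟨w, hw, hev⟩
  refine ⟨?_, fun F hF => ⟨part2a F hF, part2b F hF⟩⟩
  intro C _ _
  constructor
  · rintro ⟨v, hv, hs, hirr⟩
    exact evalsL hs hv _ (TmClo.reset (gctx_rel k C))
  · rintro ⟨v, hv, hs, hirr⟩
    exact evalsR hs hv _ (TmClo.reset (gctx_rel k C))
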